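/- Let s ⊂ ℤ^n be an affinely independent set with exactly n+1 elements and let P = conv(s) ⊆ ℝ^n. Suppose there exist disjoint nonempty subsets t_0, t_1 ⊆ s with t_0 ∪ t_1 = s such that P ∩ ℤ^n ⊆ conv(t_0) ∪ conv(t_1). Then there do not exist a finite set S ⊆ ℤ^n, a point v ∈ ℤ^n, and an integer r ≥ 2 such that P = v + r·conv(S). (This is the step in the proof of Theorem 2.6, (vi) ⇒ (ii), showing that a lattice simplex with positive lattice defect cannot be a nontrivial multiple r·P' of a lattice polytope P', because for r ≥ 2 every edge of r·P' contains a lattice point in its relative interior, while an edge joining Q_0 to Q_1 can contain lattice points only at its endpoints.) -/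

import Mathlib

/-- A lattice simplex `P = conv(s)` with positive lattice defect (two disjoint faces
`conv(t0)`, `conv(t1)` covering all lattice points of `P`) cannot be a nontrivial multiple
`v + r • conv(S)` of a lattice polytope with `r ≥ 2`. -/
theorem stmt_9 (n : ℕ) (s : Finset (Fin n → ℝ))
    (hlat : ∀ x ∈ s, ∀ i, ∃ m : ℤ, x i = (m : ℝ))
    (hcard : s.card = n + 1)
    (hind : AffineIndependent ℝ (fun p : s => (p : Fin n → ℝ)))
    (t0 t1 : Finset (Fin n → ℝ)) (ht0 : t0 ⊆ s) (ht1 : t1 ⊆ s)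
    (ht0ne : t0.Nonempty) (ht1ne : t1.Nonempty)
    (hdisj : Disjoint t0 t1) (hunion : t0 ∪ t1 = s)
    (hcover : {x ∈ convexHull ℝ (s : Set (Fin n → ℝ)) | ∀ i, ∃ m : ℤ, x i = (m : ℝ)} ⊆
      convexHull ℝ (t0 : Set (Fin n → ℝ)) ∪ convexHull ℝ (t1 : Set (Fin n → ℝ))) :
    ¬ ∃ (S : Finset (Fin n → ℝ)) (v : Fin n → ℝ) (r : ℕ),
        (∀ x ∈ S, ∀ i, ∃ m : ℤ, x i = (m : ℝ)) ∧
        (∀ i, ∃ m : ℤ, v i = (m : ℝ)) ∧ 2 ≤ r ∧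
        convexHull ℝ (s : Set (Fin n → ℝ)) =
          (fun x => v + (r : ℝ) • x) '' convexHull ℝ (S : Set (Fin n → ℝ)) := by
  rintro ⟨S, v, r, hSlat, hvlat, hr2, hP⟩
  have hr0 : (0 : ℝ) < (r : ℝ) := by
    have : (0 : ℕ) < r := by omega
    exact_mod_cast this
  have hr1 : (0 : ℝ) < (r : ℝ) - 1 := by
    have : (1 : ℕ) < r := by omega
    have : (1 : ℝ) < (r : ℝ) := by exact_mod_cast this
    linarith
  -- the affine map x ↦ v + r • x
  set g : (Fin n → ℝ) →ᵃ[ℝ] (Fin n → ℝ) :=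
    { toFun := fun x => v + (r : ℝ) • x
      linear := (r : ℝ) • LinearMap.id
      map_vadd' := by
        intro p w
        simp only [LinearMap.smul_apply, LinearMap.id_apply, vadd_eq_add]
        rw [smul_add]
        abel } with hg
  have hgapp : ∀ x, g x = v + (r : ℝ) • x := fun _ => rfl
  -- P = conv (g '' S)
  have hP' : convexHull ℝ (s : Set (Fin n → ℝ)) = convexHull ℝ (g '' (S : Set (Fin n → ℝ))) := by
    rw [← AffineMap.image_convexHull, hP]
    rfl
  -- the disjointness of affine spans
  have hspan : Disjoint (affineSpan ℝ (t0 : Set (Fin n → ℝ)) : Set (Fin n → ℝ))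
      (affineSpan ℝ (t1 : Set (Fin n → ℝ))) := by
    have hd : Disjoint (((↑) : s → (Fin n → ℝ)) ⁻¹' (t0 : Set (Fin n → ℝ)))
        (((↑) : s → (Fin n → ℝ)) ⁻¹' (t1 : Set (Fin n → ℝ))) := by
      have : Disjoint (t0 : Set (Fin n → ℝ)) (t1 : Set (Fin n → ℝ)) := by
        exact_mod_cast hdisj
      exact this.preimage _
    have h := hind.affineSpan_disjoint_of_disjoint hd
    have h0 : (fun p : s => (p : Fin n → ℝ)) '' (((↑) : s → (Fin n → ℝ)) ⁻¹' (t0 : Set _))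
        = (t0 : Set (Fin n → ℝ)) := by
      ext y
      simp only [Set.mem_image, Set.mem_preimage, Finset.mem_coe, Subtype.exists,
        exists_and_left, exists_prop, exists_eq_right_right]
      exact ⟨fun h => h.1, fun h => ⟨h, ht0 h⟩⟩
    have h1 : (fun p : s => (p : Fin n → ℝ)) '' (((↑) : s → (Fin n → ℝ)) ⁻¹' (t1 : Set _))
        = (t1 : Set (Fin n → ℝ)) := by
      ext y
      simp only [Set.mem_image, Set.mem_preimage, Finset.mem_coe, Subtype.exists,
        exists_and_left, exists_prop, exists_eq_right_right]
      exact ⟨fun h => h.1, fun h => ⟨h, ht1 h⟩⟩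
    rwa [h0, h1] at h
  -- every point v + r • w, w ∈ S, is a lattice point of P
  have hmem : ∀ w ∈ S, v + (r : ℝ) • w ∈
      convexHull ℝ (t0 : Set (Fin n → ℝ)) ∪ convexHull ℝ (t1 : Set (Fin n → ℝ)) := by
    intro w hw
    apply hcover
    constructor
    · rw [hP]
      exact ⟨w, subset_convexHull ℝ _ hw, rfl⟩
    · intro i
      obtain ⟨mv, hmv⟩ := hvlat i
      obtain ⟨mw, hmw⟩ := hSlat w hw i
      refine ⟨mv + r * mw, ?_⟩
      simp only [Pi.add_apply, Pi.smul_apply, smul_eq_mul, hmv, hmw]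
      push_cast
      ring
  -- a helper: a point in both convex hulls is absurd
  have habs : ∀ y : Fin n → ℝ, y ∈ (affineSpan ℝ (t0 : Set (Fin n → ℝ)) : Set (Fin n → ℝ)) →
      y ∈ (affineSpan ℝ (t1 : Set (Fin n → ℝ)) : Set (Fin n → ℝ)) → False := by
    intro y hy0 hy1
    exact Set.disjoint_left.1 hspan hy0 hy1
  -- find w0 ∈ S with v + r•w0 ∈ conv t0
  have hex : ∀ (u0 u1 : Finset (Fin n → ℝ)), u0 ⊆ s → u0.Nonempty →
      (convexHull ℝ (t0 : Set (Fin n → ℝ)) ∪ convexHull ℝ (t1 : Set (Fin n → ℝ))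
        = convexHull ℝ (u0 : Set (Fin n → ℝ)) ∪ convexHull ℝ (u1 : Set (Fin n → ℝ))) →
      Disjoint (affineSpan ℝ (u0 : Set (Fin n → ℝ)) : Set (Fin n → ℝ))
        (affineSpan ℝ (u1 : Set (Fin n → ℝ))) →
      ∃ w ∈ S, v + (r : ℝ) • w ∈ convexHull ℝ (u0 : Set (Fin n → ℝ)) := by
    intro u0 u1 hu0s hu0ne hcup hdisj'
    by_contra h
    push_neg at h
    have himg : g '' (S : Set (Fin n → ℝ)) ⊆ convexHull ℝ (u1 : Set (Fin n → ℝ)) := by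
      rintro _ ⟨w, hw, rfl⟩
      have := hmem w hw
      rw [hcup] at this
      rcases this with h' | h'
      · exact absurd h' (h w hw)
      · exact h'
    have hPsub : convexHull ℝ (s : Set (Fin n → ℝ)) ⊆ convexHull ℝ (u1 : Set (Fin n → ℝ)) := by
      rw [hP']
      exact convexHull_min himg (convex_convexHull ℝ _)
    obtain ⟨a, ha⟩ := hu0ne
    exact Set.disjoint_left.1 hdisj' (subset_affineSpan ℝ _ (by exact_mod_cast ha))
      (convexHull_subset_affineSpan _ (hPsub (subset_convexHull ℝ _ (by exact_mod_cast hu0s ha))))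
  obtain ⟨w0, hw0S, hw0⟩ := hex t0 t1 ht0 ht0ne rfl hspan
  obtain ⟨w1, hw1S, hw1⟩ := hex t1 t0 ht1 ht1ne (Set.union_comm _ _) hspan.symm
  set p0 : Fin n → ℝ := v + (r : ℝ) • w0 with hp0
  set p1 : Fin n → ℝ := v + (r : ℝ) • w1 with hp1
  set x : Fin n → ℝ := (((r : ℝ) - 1) / r) • p0 + ((1 : ℝ) / r) • p1 with hx
  -- x is in P
  have hp0P : p0 ∈ convexHull ℝ (s : Set (Fin n → ℝ)) :=
    convexHull_mono (by exact_mod_cast ht0) hw0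
  have hp1P : p1 ∈ convexHull ℝ (s : Set (Fin n → ℝ)) :=
    convexHull_mono (by exact_mod_cast ht1) hw1
  have hxP : x ∈ convexHull ℝ (s : Set (Fin n → ℝ)) := by
    refine (convex_convexHull ℝ _) hp0P hp1P ?_ ?_ ?_
    · positivity
    · positivity
    · field_simp
      ring
  -- x is a lattice point
  have hxlat : ∀ i, ∃ m : ℤ, x i = (m : ℝ) := by
    intro i
    obtain ⟨mv, hmv⟩ := hvlat i
    obtain ⟨m0, hm0⟩ := hSlat w0 hw0S i
    obtain ⟨m1, hm1⟩ := hSlat w1 hw1S i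
    refine ⟨mv + ((r : ℤ) - 1) * m0 + m1, ?_⟩
    have hne : (r : ℝ) ≠ 0 := ne_of_gt hr0
    simp only [hx, hp0, hp1, Pi.add_apply, Pi.smul_apply, smul_eq_mul, hmv, hm0, hm1]
    push_cast
    field_simp
    ring
  -- now the dichotomy
  have hx01 := hcover ⟨hxP, hxlat⟩
  rcases hx01 with hx0 | hx1
  · -- x ∈ conv t0 : then p1 ∈ affineSpan t0, contradiction
    have hxs : x ∈ affineSpan ℝ (t0 : Set (Fin n → ℝ)) := convexHull_subset_affineSpan _ hx0
    have hp0s : p0 ∈ affineSpan ℝ (t0 : Set (Fin n → ℝ)) := convexHull_subset_affineSpan _ hw0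
    have key : p1 = (r : ℝ) • (x -ᵥ p0) +ᵥ p0 := by
      funext i
      have hne : (r : ℝ) ≠ 0 := ne_of_gt hr0
      simp only [hx, vsub_eq_sub, vadd_eq_add, Pi.add_apply, Pi.smul_apply, Pi.sub_apply,
        smul_eq_mul]
      field_simp
      ring
    have hp1s : p1 ∈ affineSpan ℝ (t0 : Set (Fin n → ℝ)) := by
      rw [key]
      exact AffineSubspace.smul_vsub_vadd_mem _ _ hxs hp0s hp0s
    exact habs p1 hp1s (convexHull_subset_affineSpan _ hw1)
  · -- x ∈ conv t1 : then p0 ∈ affineSpan t1, contradiction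
    have hxs : x ∈ affineSpan ℝ (t1 : Set (Fin n → ℝ)) := convexHull_subset_affineSpan _ hx1
    have hp1s : p1 ∈ affineSpan ℝ (t1 : Set (Fin n → ℝ)) := convexHull_subset_affineSpan _ hw1
    have key : p0 = ((r : ℝ) / ((r : ℝ) - 1)) • (x -ᵥ p1) +ᵥ p1 := by
      funext i
      have hne : (r : ℝ) ≠ 0 := ne_of_gt hr0
      have hne1 : (r : ℝ) - 1 ≠ 0 := ne_of_gt hr1
      simp only [hx, vsub_eq_sub, vadd_eq_add, Pi.add_apply, Pi.smul_apply, Pi.sub_apply,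
        smul_eq_mul]
      field_simp
      ring
    have hp0s : p0 ∈ affineSpan ℝ (t1 : Set (Fin n → ℝ)) := by
      rw [key]
      exact AffineSubspace.smul_vsub_vadd_mem _ _ hxs hp1s hp1s
    exact habs p0 (convexHull_subset_affineSpan _ hw0) hp0s
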